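/- The open interval S ⊂ ℝ/ℤ of length 1/(k+1) centred at 1/(2k-2) is k-sum-free: there do not exist s_1, ..., s_k ∈ S with s_1 + ... + s_k ∈ S. -/

import Mathlib

def KSumFreeCircle (k : ℕ) (S : Set (AddCircle (1 : ℝ))) : Prop :=
  ¬ ∃ s : Fin k → AddCircle (1 : ℝ), (∀ i, s i ∈ S) ∧ (∑ i, s i) ∈ S

theorem stmt_1 (k : ℕ) (hk : 2 ≤ k) :
    KSumFreeCircle k
      ((fun x : ℝ => (x : AddCircle (1 : ℝ))) ''
        Set.Ioo (1 / (2 * (k : ℝ) - 2) - 1 / (2 * ((k : ℝ) + 1)))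
                (1 / (2 * (k : ℝ) - 2) + 1 / (2 * ((k : ℝ) + 1)))) := by
  rintro ⟨s, hs, hsum⟩
  choose x hx hxs using hs
  obtain ⟨y, hy, hys⟩ := hsum
  set K : ℝ := (k : ℝ) with hKdef
  have hK : (2:ℝ) ≤ K := by rw [hKdef]; exact_mod_cast hk
  have h1 : (0:ℝ) < 2*K - 2 := by linarith
  have h2 : (0:ℝ) < 2*(K+1) := by linarith
  have : NeZero k := ⟨by omega⟩
  have hys' : ((y : ℝ) : AddCircle (1:ℝ)) = ∑ i, s i := hys
  have hsumeq : ((∑ i, x i : ℝ) : AddCircle (1:ℝ)) = ∑ i, s i := by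
    rw [show ((∑ i, x i : ℝ) : AddCircle (1:ℝ)) = ∑ i, ((x i : ℝ) : AddCircle (1:ℝ)) from
      map_sum (QuotientAddGroup.mk' _) x Finset.univ]
    exact Finset.sum_congr rfl fun i _ => hxs i
  have hzero : ((∑ i, x i - y : ℝ) : AddCircle (1:ℝ)) = 0 := by
    have hsub : ((∑ i, x i - y : ℝ) : AddCircle (1:ℝ))
        = ((∑ i, x i : ℝ) : AddCircle (1:ℝ)) - (y : AddCircle (1:ℝ)) :=
      map_sub (QuotientAddGroup.mk' _) _ _
    rw [hsub, hsumeq, hys', sub_self]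
  obtain ⟨n, hn⟩ := (AddCircle.coe_eq_zero_iff (1:ℝ)).mp hzero
  have hn' : ∑ i, x i - y = (n : ℝ) := by rw [← hn]; simp
  set lo : ℝ := 1/(2*K-2) - 1/(2*(K+1)) with hlodef
  set hi : ℝ := 1/(2*K-2) + 1/(2*(K+1)) with hhidef
  have hsl : K * lo < ∑ i, x i := by
    have := Finset.sum_lt_sum_of_nonempty (Finset.univ_nonempty (α := Fin k))
      (f := fun _ => lo) (g := x) (fun i _ => (hx i).1)
    simpa [Finset.sum_const, Finset.card_univ, nsmul_eq_mul] using this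
  have hsh : ∑ i, x i < K * hi := by
    have := Finset.sum_lt_sum_of_nonempty (Finset.univ_nonempty (α := Fin k))
      (f := x) (g := fun _ => hi) (fun i _ => (hx i).2)
    simpa [Finset.sum_const, Finset.card_univ, nsmul_eq_mul] using this
  have hKlo : K * lo = hi := by
    rw [hlodef, hhidef]; field_simp [(by linarith : (0:ℝ) < K - 1).ne', (by linarith : (0:ℝ) < K + 1).ne']; ring
  have hKhi : K * hi = lo + 1 := by
    rw [hlodef, hhidef]; field_simp [(by linarith : (0:ℝ) < K - 1).ne', (by linarith : (0:ℝ) < K + 1).ne']; ring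
  have hlow : (0:ℝ) < n := by rw [← hn']; linarith [hy.2]
  have hhigh : (n:ℝ) < 1 := by rw [← hn']; linarith [hy.1]
  have h5 : (0:ℤ) < n := by exact_mod_cast hlow
  have h6 : n < 1 := by exact_mod_cast hhigh
  omega
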